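/- Let N ∈ ℕ with N ≥ 2, and write ζ_2(a, w) = ∑_{0<m<n} m^{−a} n^{−w} (for a ∈ ℕ and Re w large enough that the series converges absolutely). Then, as s → 1 with Re s > 1, the function s ↦ (N−1)(s−1)·ζ_2(N, s) + s(s+1−N)·ζ_2(N−1, s+1) − s(s+1)·ζ_2(N−2, s+2) tends to the limit (N−1)·ζ(N) + (2−N)·ζ_2(N−1, 2) − 2·ζ_2(N−2, 3). (Proposition 5.6 together with the Arakawa–Kaneko expansion (5.14): in particular, lim_{s→1, Re s>1} (s−1)·ζ_2(N, s) = ζ(N), and the displayed limit is the value ζ_2^{des}(N, 1) of the desingularized double zeta-function.) -/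

import Mathlib

open Complex Filter Topology

/-- The Euler–Zagier double zeta-function
`ζ₂(a, w) = ∑_{0 < m < n} m^{-a} n^{-w}` (as an absolutely convergent double
series, written with `m = p₁ + 1`, `n = p₁ + p₂ + 2`). -/
noncomputable def zeta2 (a w : ℂ) : ℂ :=
  ∑' p : ℕ × ℕ, ((p.1 : ℂ) + 1) ^ (-a) * ((p.1 : ℂ) + (p.2 : ℂ) + 2) ^ (-w)

namespace Zeta2Aux

lemma base1_eq (m : ℕ) : ((m : ℂ) + 1) = (((m : ℝ) + 1 : ℝ) : ℂ) := by push_cast; ring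

lemma base2_eq (p : ℕ × ℕ) :
    ((p.1 : ℂ) + (p.2 : ℂ) + 2) = (((p.1 : ℝ) + (p.2 : ℝ) + 2 : ℝ) : ℂ) := by push_cast; ring

lemma norm_cpow_real (x : ℝ) (hx : 0 < x) (w : ℂ) : ‖(x : ℂ) ^ w‖ = x ^ w.re := by
  rw [Complex.norm_cpow_eq_rpow_re_of_pos hx]

lemma norm_term1 (m : ℕ) (w : ℂ) : ‖((m : ℂ) + 1) ^ (-w)‖ = ((m : ℝ) + 1) ^ (-w.re) := by
  rw [base1_eq, norm_cpow_real _ (by positivity), Complex.neg_re]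

lemma norm_term (a w : ℂ) (p : ℕ × ℕ) :
    ‖((p.1 : ℂ) + 1) ^ (-a) * ((p.1 : ℂ) + (p.2 : ℂ) + 2) ^ (-w)‖
      = ((p.1 : ℝ) + 1) ^ (-a.re) * ((p.1 : ℝ) + (p.2 : ℝ) + 2) ^ (-w.re) := by
  rw [norm_mul, norm_term1, base2_eq, norm_cpow_real _ (by positivity), Complex.neg_re]

lemma ne1 (p : ℕ × ℕ) : ((p.1 : ℂ) + (p.2 : ℂ) + 2) ≠ 0 := by
  rw [base2_eq]
  exact Complex.ofReal_ne_zero.mpr (by positivity)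

lemma ne2 (m : ℕ) : ((m : ℂ) + 1) ≠ 0 := by
  rw [base1_eq]
  exact Complex.ofReal_ne_zero.mpr (by positivity)

lemma summable_shift (r : ℝ) (hr : 1 < r) : Summable (fun n : ℕ => ((n : ℝ) + 1) ^ (-r)) := by
  have h := Real.summable_one_div_nat_rpow.mpr hr
  have h2 := (summable_nat_add_iff 1).mpr h
  refine h2.congr fun n => ?_
  push_cast
  rw [one_div, ← Real.rpow_neg (by positivity)]

lemma rpow_neg_anti {x y c : ℝ} (hx : 0 < x) (hxy : x ≤ y) (hc : 0 ≤ c) :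
    y ^ (-c) ≤ x ^ (-c) := by
  rw [Real.rpow_neg hx.le, Real.rpow_neg (hx.trans_le hxy).le]
  exact inv_anti₀ (Real.rpow_pos_of_pos hx c) (Real.rpow_le_rpow hx.le hxy hc)

lemma key_bound {α β : ℝ} (hα : 0 ≤ α) (hβ : (3/2 : ℝ) ≤ β) (hαβ : 3 ≤ α + β) (p : ℕ × ℕ) :
    ((p.1 : ℝ) + 1) ^ (-α) * ((p.1 : ℝ) + (p.2 : ℝ) + 2) ^ (-β)
      ≤ ((p.1 : ℝ) + 1) ^ (-(3/2 : ℝ)) * ((p.2 : ℝ) + 1) ^ (-(3/2 : ℝ)) := by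
  have h01 : (0:ℝ) ≤ (p.1 : ℝ) := Nat.cast_nonneg _
  have h02 : (0:ℝ) ≤ (p.2 : ℝ) := Nat.cast_nonneg _
  set m : ℝ := (p.1 : ℝ) + 1 with hm
  set n : ℝ := (p.1 : ℝ) + (p.2 : ℝ) + 2 with hn
  set q : ℝ := (p.2 : ℝ) + 1 with hq
  have hm1 : 1 ≤ m := by rw [hm]; linarith
  have hm0 : 0 < m := by linarith
  have hmn : m ≤ n := by rw [hm, hn]; linarith
  have hq0 : 0 < q := by rw [hq]; linarith
  have hqn : q ≤ n := by rw [hq, hn]; linarith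
  have hn0 : (0:ℝ) < n := by rw [hn]; linarith
  have h1 : n ^ (-β) = n ^ (-(β - 3/2)) * n ^ (-(3/2 : ℝ)) := by
    rw [← Real.rpow_add hn0]; ring_nf
  calc m ^ (-α) * n ^ (-β) = m ^ (-α) * (n ^ (-(β - 3/2)) * n ^ (-(3/2 : ℝ))) := by rw [h1]
    _ ≤ m ^ (-α) * (m ^ (-(β - 3/2)) * q ^ (-(3/2 : ℝ))) := by
        refine mul_le_mul_of_nonneg_left ?_ (by positivity)
        exact mul_le_mul (rpow_neg_anti hm0 hmn (by linarith))
          (rpow_neg_anti hq0 hqn (by norm_num)) (by positivity) (by positivity)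
    _ = m ^ (-α + -(β - 3/2)) * q ^ (-(3/2 : ℝ)) := by
        rw [← mul_assoc, ← Real.rpow_add hm0]
    _ ≤ m ^ (-(3/2 : ℝ)) * q ^ (-(3/2 : ℝ)) := by
        refine mul_le_mul_of_nonneg_right ?_ (by positivity)
        exact Real.rpow_le_rpow_of_exponent_le hm1 (by linarith)

lemma summable_bound32 :
    Summable (fun p : ℕ × ℕ =>
      ((p.1 : ℝ) + 1) ^ (-(3/2 : ℝ)) * ((p.2 : ℝ) + 1) ^ (-(3/2 : ℝ))) :=
  Summable.mul_of_nonneg (f := fun n : ℕ => ((n : ℝ) + 1) ^ (-(3/2 : ℝ)))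
    (g := fun n : ℕ => ((n : ℝ) + 1) ^ (-(3/2 : ℝ)))
    (summable_shift _ (by norm_num)) (summable_shift _ (by norm_num))
    (fun n => by positivity) (fun n => by positivity)

lemma tendsto_zeta2_shift (a c : ℂ) (ha : 0 ≤ a.re) (hc : 1 ≤ c.re) (hac : 2 ≤ a.re + c.re) :
    Tendsto (fun s : ℂ => zeta2 a (s + c)) (𝓝[{s : ℂ | 1 < s.re}] 1) (𝓝 (zeta2 a (1 + c))) := by
  unfold zeta2
  refine tendsto_tsum_of_dominated_convergence summable_bound32 (fun p => ?_) ?_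
  · have hcont : Continuous fun s : ℂ => ((p.1 : ℂ) + (p.2 : ℂ) + 2) ^ (-(s + c)) :=
      Continuous.const_cpow ((continuous_id.add continuous_const).neg) (Or.inl (ne1 p))
    exact (((hcont.tendsto 1)).const_mul _).mono_left nhdsWithin_le_nhds
  · filter_upwards [eventually_mem_nhdsWithin] with s hs p
    have hs' : 1 < s.re := hs
    rw [norm_term, Complex.add_re]
    have h01 : (0:ℝ) ≤ (p.1 : ℝ) := Nat.cast_nonneg _
    have h02 : (0:ℝ) ≤ (p.2 : ℝ) := Nat.cast_nonneg _
    have hn1 : (1:ℝ) ≤ (p.1 : ℝ) + (p.2 : ℝ) + 2 := by linarith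
    calc ((p.1 : ℝ) + 1) ^ (-a.re) * ((p.1 : ℝ) + (p.2 : ℝ) + 2) ^ (-(s.re + c.re))
        ≤ ((p.1 : ℝ) + 1) ^ (-a.re) * ((p.1 : ℝ) + (p.2 : ℝ) + 2) ^ (-(1 + c.re)) := by
          refine mul_le_mul_of_nonneg_left ?_ (by positivity)
          exact Real.rpow_le_rpow_of_exponent_le hn1 (by linarith)
      _ ≤ ((p.1 : ℝ) + 1) ^ (-(3/2 : ℝ)) * ((p.2 : ℝ) + 1) ^ (-(3/2 : ℝ)) :=
          key_bound ha (by linarith) (by linarith) p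

lemma sum_inv_sqrt_le (M : ℕ) :
    ∑ i ∈ Finset.range M, ((i : ℝ) + 1) ^ (-(1/2 : ℝ)) ≤ 2 * Real.sqrt M := by
  induction M with
  | zero => simp
  | succ M ih =>
    rw [Finset.sum_range_succ]
    set a : ℝ := Real.sqrt M with hadef
    have hb' : Real.sqrt ((M : ℕ) + 1 : ℕ) = Real.sqrt ((M : ℝ) + 1) := by push_cast; ring_nf
    set b : ℝ := Real.sqrt ((M : ℝ) + 1) with hbdef
    have ha2 : a ^ 2 = (M : ℝ) := Real.sq_sqrt (Nat.cast_nonneg M)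
    have hb2 : b ^ 2 = (M : ℝ) + 1 := Real.sq_sqrt (by positivity)
    have ha0 : 0 ≤ a := Real.sqrt_nonneg _
    have hb0 : 0 < b := by rw [hbdef]; exact Real.sqrt_pos.mpr (by positivity)
    have hterm : ((M : ℝ) + 1) ^ (-(1/2 : ℝ)) = b⁻¹ := by
      rw [Real.rpow_neg (by positivity), hbdef, Real.sqrt_eq_rpow]
    have h2 : b⁻¹ ≤ 2 * (b - a) := by
      rw [inv_eq_one_div, div_le_iff₀ hb0]
      nlinarith [sq_nonneg (a - b)]
    rw [hterm, hb']
    linarith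

/-- The partial sum `S m s = ∑_{i ≤ m} (i+1)^{-s}`. -/
noncomputable def S (m : ℕ) (s : ℂ) : ℂ := ∑ i ∈ Finset.range (m + 1), ((i : ℂ) + 1) ^ (-s)

lemma summable_f {s : ℂ} (hs : 1 < s.re) : Summable (fun n : ℕ => ((n : ℂ) + 1) ^ (-s)) := by
  apply Summable.of_norm
  exact (summable_shift s.re (by linarith)).congr fun n => (norm_term1 n s).symm

lemma zeta_eq {s : ℂ} (hs : 1 < s.re) : riemannZeta s = ∑' n : ℕ, ((n : ℂ) + 1) ^ (-s) := by
  rw [zeta_eq_tsum_one_div_nat_add_one_cpow hs]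
  exact tsum_congr fun n => by rw [cpow_neg, one_div]

lemma inner_eq {s : ℂ} (hs : 1 < s.re) (m : ℕ) :
    ∑' k : ℕ, ((m : ℂ) + (k : ℂ) + 2) ^ (-s) = riemannZeta s - S m s := by
  have key := Summable.sum_add_tsum_nat_add (f := fun n : ℕ => ((n : ℂ) + 1) ^ (-s)) (m + 1)
    (summable_f hs)
  have hcast : ∀ k : ℕ, (((k + (m + 1) : ℕ) : ℂ) + 1) ^ (-s) = ((m : ℂ) + (k : ℂ) + 2) ^ (-s) := by
    intro k
    congr 1
    push_cast
    ring
  calc ∑' k : ℕ, ((m : ℂ) + (k : ℂ) + 2) ^ (-s)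
      = ∑' k : ℕ, (((k + (m + 1) : ℕ) : ℂ) + 1) ^ (-s) := (tsum_congr fun k => hcast k).symm
    _ = riemannZeta s - S m s := by
        rw [zeta_eq hs]
        exact eq_sub_of_add_eq' key

lemma summable_term {N : ℕ} (hN : 2 ≤ N) {s : ℂ} (hs : 1 < s.re) :
    Summable (fun p : ℕ × ℕ =>
      ((p.1 : ℂ) + 1) ^ (-(N : ℂ)) * ((p.1 : ℂ) + (p.2 : ℂ) + 2) ^ (-s)) := by
  apply Summable.of_norm
  have hsum : Summable (fun p : ℕ × ℕ =>
      ((p.1 : ℝ) + 1) ^ (-(2 : ℝ)) * ((p.2 : ℝ) + 1) ^ (-s.re)) :=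
    Summable.mul_of_nonneg (f := fun n : ℕ => ((n : ℝ) + 1) ^ (-(2 : ℝ)))
      (g := fun n : ℕ => ((n : ℝ) + 1) ^ (-s.re))
      (summable_shift _ one_lt_two) (summable_shift _ hs)
      (fun n => by positivity) (fun n => by positivity)
  refine hsum.of_nonneg_of_le (fun p => norm_nonneg _) fun p => ?_
  rw [norm_term]
  have h01 : (0:ℝ) ≤ (p.1 : ℝ) := Nat.cast_nonneg _
  have h02 : (0:ℝ) ≤ (p.2 : ℝ) := Nat.cast_nonneg _
  have hre : ((N : ℂ)).re = (N : ℝ) := by simp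
  rw [hre]
  refine mul_le_mul ?_ ?_ (by positivity) (by positivity)
  · refine Real.rpow_le_rpow_of_exponent_le (by linarith) ?_
    have : (2:ℝ) ≤ (N:ℝ) := by exact_mod_cast hN
    linarith
  · exact rpow_neg_anti (by linarith) (by linarith) (by linarith)

lemma step_A {N : ℕ} (hN : 2 ≤ N) {s : ℂ} (hs : 1 < s.re) :
    (s - 1) * zeta2 (N : ℂ) s
      = ∑' m : ℕ, ((m : ℂ) + 1) ^ (-(N : ℂ)) *
          ((s - 1) * riemannZeta s - (s - 1) * S m s) := by
  have h1 : zeta2 (N : ℂ) s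
      = ∑' m : ℕ, ((m : ℂ) + 1) ^ (-(N : ℂ)) * (riemannZeta s - S m s) := by
    unfold zeta2
    rw [Summable.tsum_prod' (summable_term hN hs) (fun m => (summable_term hN hs).prod_factor m)]
    refine tsum_congr fun m => ?_
    have hrfl : ∀ c : ℕ, ((((m, c).1 : ℕ) : ℂ) + 1) ^ (-(N : ℂ))
        * (((m, c).1 : ℂ) + ((m, c).2 : ℂ) + 2) ^ (-s)
        = ((m : ℂ) + 1) ^ (-(N : ℂ)) * ((m : ℂ) + (c : ℂ) + 2) ^ (-s) := fun c => rfl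
    rw [tsum_congr hrfl, tsum_mul_left, inner_eq hs m]
  rw [h1, ← tsum_mul_left]
  exact tsum_congr fun m => by ring

lemma tendsto_term1 (N : ℕ) (hN : 2 ≤ N) :
    Tendsto (fun s : ℂ => (s - 1) * zeta2 (N : ℂ) s) (𝓝[{s : ℂ | 1 < s.re}] 1)
      (𝓝 (riemannZeta (N : ℂ))) := by
  set F := 𝓝[{s : ℂ | 1 < s.re}] (1 : ℂ) with hF
  have hsub : {s : ℂ | 1 < s.re} ⊆ {(1 : ℂ)}ᶜ := by
    intro s hs
    simp only [Set.mem_compl_iff, Set.mem_singleton_iff]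
    rintro rfl
    simp only [Set.mem_setOf_eq, Complex.one_re, lt_self_iff_false] at hs
  have hz : Tendsto (fun s : ℂ => (s - 1) * riemannZeta s) F (𝓝 1) :=
    riemannZeta_residue_one.mono_left (nhdsWithin_mono 1 hsub)
  have hBsum : Summable (fun m : ℕ =>
      2 * ((m : ℝ) + 1) ^ (-(2 : ℝ)) + 2 * ((m : ℝ) + 1) ^ (-(3/2 : ℝ))) :=
    ((summable_shift 2 one_lt_two).mul_left 2).add
      ((summable_shift (3/2) (by norm_num)).mul_left 2)
  have hpt : ∀ m : ℕ, Tendsto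
      (fun s : ℂ => ((m : ℂ) + 1) ^ (-(N : ℂ)) * ((s - 1) * riemannZeta s - (s - 1) * S m s))
      F (𝓝 (((m : ℂ) + 1) ^ (-(N : ℂ)))) := by
    intro m
    have hSc : Continuous (S m) :=
      continuous_finset_sum _ fun i _ => Continuous.const_cpow continuous_neg (Or.inl (ne2 i))
    have hS0 : Tendsto (fun s : ℂ => (s - 1) * S m s) F (𝓝 0) := by
      have h : Tendsto (fun s : ℂ => (s - 1) * S m s) (𝓝 1) (𝓝 ((1 - 1) * S m 1)) :=
        ((continuous_id.sub continuous_const).mul hSc).tendsto 1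
      simp only [sub_self, zero_mul] at h
      exact h.mono_left nhdsWithin_le_nhds
    have h := (hz.sub hS0).const_mul (((m : ℂ) + 1) ^ (-(N : ℂ)))
    simpa using h
  have hbound : ∀ᶠ s in F, ∀ m : ℕ,
      ‖((m : ℂ) + 1) ^ (-(N : ℂ)) * ((s - 1) * riemannZeta s - (s - 1) * S m s)‖
        ≤ 2 * ((m : ℝ) + 1) ^ (-(2 : ℝ)) + 2 * ((m : ℝ) + 1) ^ (-(3/2 : ℝ)) := by
    have ev1 : ∀ᶠ s in F, dist ((s - 1) * riemannZeta s) 1 < 1 :=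
      (Metric.tendsto_nhds.mp hz) 1 one_pos
    have ev2 : ∀ᶠ s in F, ‖s - 1‖ ≤ 1 := by
      have h : ∀ᶠ s in 𝓝 (1 : ℂ), ‖s - 1‖ ≤ 1 := by
        filter_upwards [Metric.closedBall_mem_nhds (1 : ℂ) one_pos] with s hs
        simpa [Metric.mem_closedBall, dist_eq_norm] using hs
      exact h.filter_mono nhdsWithin_le_nhds
    filter_upwards [ev1, ev2, eventually_mem_nhdsWithin] with s h1 h2 h3 m
    have hs' : 1 < s.re := h3
    have hm0 : (0:ℝ) ≤ (m : ℝ) := Nat.cast_nonneg m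
    have hm1 : (1:ℝ) ≤ (m : ℝ) + 1 := by linarith
    have hNge : (2:ℝ) ≤ (N : ℝ) := by exact_mod_cast hN
    have hzb : ‖(s - 1) * riemannZeta s‖ ≤ 2 := by
      rw [dist_eq_norm] at h1
      calc ‖(s - 1) * riemannZeta s‖ = ‖((s - 1) * riemannZeta s - 1) + 1‖ := by
            rw [sub_add_cancel]
        _ ≤ ‖(s - 1) * riemannZeta s - 1‖ + ‖(1 : ℂ)‖ := norm_add_le _ _
        _ ≤ 2 := by simp only [norm_one]; linarith
    have hSb : ‖S m s‖ ≤ 2 * Real.sqrt ((m : ℝ) + 1) := by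
      have hc : Real.sqrt ((m + 1 : ℕ) : ℝ) = Real.sqrt ((m : ℝ) + 1) := by push_cast; ring_nf
      calc ‖S m s‖ ≤ ∑ i ∈ Finset.range (m + 1), ‖((i : ℂ) + 1) ^ (-s)‖ := norm_sum_le _ _
        _ = ∑ i ∈ Finset.range (m + 1), ((i : ℝ) + 1) ^ (-s.re) :=
            Finset.sum_congr rfl fun i _ => norm_term1 i s
        _ ≤ ∑ i ∈ Finset.range (m + 1), ((i : ℝ) + 1) ^ (-(1/2 : ℝ)) := by
            refine Finset.sum_le_sum fun i _ => ?_
            have : (0:ℝ) ≤ (i : ℝ) := Nat.cast_nonneg i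
            exact Real.rpow_le_rpow_of_exponent_le (by linarith) (by linarith)
        _ ≤ 2 * Real.sqrt ((m + 1 : ℕ) : ℝ) := sum_inv_sqrt_le (m + 1)
        _ = 2 * Real.sqrt ((m : ℝ) + 1) := by rw [hc]
    have hNre : ((N : ℂ)).re = (N : ℝ) := by simp
    rw [norm_mul, norm_term1, hNre]
    have hA : ‖(s - 1) * riemannZeta s - (s - 1) * S m s‖
        ≤ 2 + 2 * Real.sqrt ((m : ℝ) + 1) := by
      have hprod : ‖(s - 1) * S m s‖ ≤ 1 * (2 * Real.sqrt ((m : ℝ) + 1)) := by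
        rw [norm_mul]
        exact mul_le_mul h2 hSb (norm_nonneg _) zero_le_one
      calc ‖(s - 1) * riemannZeta s - (s - 1) * S m s‖
          ≤ ‖(s - 1) * riemannZeta s‖ + ‖(s - 1) * S m s‖ := norm_sub_le _ _
        _ ≤ 2 + 2 * Real.sqrt ((m : ℝ) + 1) := by linarith
    calc ((m : ℝ) + 1) ^ (-(N : ℝ)) * ‖(s - 1) * riemannZeta s - (s - 1) * S m s‖
        ≤ ((m : ℝ) + 1) ^ (-(N : ℝ)) * (2 + 2 * Real.sqrt ((m : ℝ) + 1)) :=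
          mul_le_mul_of_nonneg_left hA (by positivity)
      _ = 2 * ((m : ℝ) + 1) ^ (-(N : ℝ))
          + 2 * (((m : ℝ) + 1) ^ (-(N : ℝ)) * Real.sqrt ((m : ℝ) + 1)) := by ring
      _ ≤ 2 * ((m : ℝ) + 1) ^ (-(2 : ℝ)) + 2 * ((m : ℝ) + 1) ^ (-(3/2 : ℝ)) := by
          have e1 : ((m : ℝ) + 1) ^ (-(N : ℝ)) ≤ ((m : ℝ) + 1) ^ (-(2 : ℝ)) :=
            Real.rpow_le_rpow_of_exponent_le hm1 (by linarith)
          have e2 : ((m : ℝ) + 1) ^ (-(N : ℝ)) * Real.sqrt ((m : ℝ) + 1)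
              ≤ ((m : ℝ) + 1) ^ (-(3/2 : ℝ)) := by
            rw [Real.sqrt_eq_rpow, ← Real.rpow_add (by positivity)]
            exact Real.rpow_le_rpow_of_exponent_le hm1 (by linarith)
          linarith
  have hmain := tendsto_tsum_of_dominated_convergence hBsum hpt hbound
  have hζN : (∑' m : ℕ, ((m : ℂ) + 1) ^ (-(N : ℂ))) = riemannZeta (N : ℂ) := by
    refine (zeta_eq ?_).symm
    simp only [Complex.natCast_re]
    exact_mod_cast lt_of_lt_of_le one_lt_two hN
  rw [hζN] at hmain
  refine Tendsto.congr' ?_ hmain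
  filter_upwards [eventually_mem_nhdsWithin] with s hs
  exact (step_A hN hs).symm

end Zeta2Aux

/-- Proposition 5.6 together with the Arakawa–Kaneko expansion (5.14): for an
integer `N ≥ 2`, as `s → 1` with `Re s > 1`,
`(N-1)(s-1) ζ₂(N, s) + s(s+1-N) ζ₂(N-1, s+1) - s(s+1) ζ₂(N-2, s+2)` tends to
`(N-1) ζ(N) + (2-N) ζ₂(N-1, 2) - 2 ζ₂(N-2, 3)` (the value `ζ₂^{des}(N, 1)`). -/
theorem zeta2des_nat_one (N : ℕ) (hN : 2 ≤ N) :
    Tendsto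
      (fun s : ℂ =>
        ((N : ℂ) - 1) * (s - 1) * zeta2 (N : ℂ) s
          + s * (s + 1 - N) * zeta2 ((N : ℂ) - 1) (s + 1)
          - s * (s + 1) * zeta2 ((N : ℂ) - 2) (s + 2))
      (𝓝[{s : ℂ | 1 < s.re}] 1)
      (𝓝 (((N : ℂ) - 1) * riemannZeta (N : ℂ)
        + (2 - (N : ℂ)) * zeta2 ((N : ℂ) - 1) 2
        - 2 * zeta2 ((N : ℂ) - 2) 3)) := by
  have hN2 : (2:ℝ) ≤ (N : ℝ) := by exact_mod_cast hN
  have h1 := Zeta2Aux.tendsto_term1 N hN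
  have hre1 : ((N : ℂ) - 1).re = (N : ℝ) - 1 := by
    simp [Complex.sub_re, Complex.natCast_re, Complex.one_re]
  have hre2 : ((N : ℂ) - 2).re = (N : ℝ) - 2 := by
    simp [Complex.sub_re, Complex.natCast_re]
  have h2 := Zeta2Aux.tendsto_zeta2_shift ((N : ℂ) - 1) 1
    (by rw [hre1]; linarith) (by norm_num) (by rw [hre1]; norm_num; linarith)
  have h3 := Zeta2Aux.tendsto_zeta2_shift ((N : ℂ) - 2) 2
    (by rw [hre2]; linarith) (by norm_num) (by rw [hre2]; norm_num; linarith)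
  rw [show (1 : ℂ) + 1 = 2 by norm_num] at h2
  rw [show (1 : ℂ) + 2 = 3 by norm_num] at h3
  have hs : Tendsto (fun s : ℂ => s) (𝓝[{s : ℂ | 1 < s.re}] 1) (𝓝 1) :=
    tendsto_id.mono_right nhdsWithin_le_nhds
  have t1 := h1.const_mul ((N : ℂ) - 1)
  have t2 : Tendsto (fun s : ℂ => s * (s + 1 - (N : ℂ)))
      (𝓝[{s : ℂ | 1 < s.re}] 1) (𝓝 (1 * (1 + 1 - (N : ℂ)))) :=
    hs.mul ((hs.add tendsto_const_nhds).sub tendsto_const_nhds)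
  have t3 : Tendsto (fun s : ℂ => s * (s + 1))
      (𝓝[{s : ℂ | 1 < s.re}] 1) (𝓝 (1 * (1 + 1))) :=
    hs.mul (hs.add tendsto_const_nhds)
  have final := (t1.add (t2.mul h2)).sub (t3.mul h3)
  have hval : ((N : ℂ) - 1) * riemannZeta (N : ℂ)
        + (2 - (N : ℂ)) * zeta2 ((N : ℂ) - 1) 2
        - 2 * zeta2 ((N : ℂ) - 2) 3
      = ((N : ℂ) - 1) * riemannZeta (N : ℂ)
        + 1 * (1 + 1 - (N : ℂ)) * zeta2 ((N : ℂ) - 1) 2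
        - 1 * (1 + 1) * zeta2 ((N : ℂ) - 2) 3 := by ring
  rw [hval]
  exact final.congr fun s => by ring
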